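/- Let D* be a minimal strongly connected digraph of order n ≥ 3 and v a linear vertex whose unique in-neighbor equals its unique out-neighbor (i.e., there is u with (u,v) and (v,u) the only arcs incident to v). Then D* − v is minimal strongly connected. -/

import Mathlib

/-- Reachability in a digraph given by its arc set `A`. -/
def Reach {α : Type*} (A : Finset (α × α)) (u v : α) : Prop :=
  Relation.ReflTransGen (fun a b => (a, b) ∈ A) u v

/-- A digraph with vertex set `V` and arc set `A` is strongly connected if
every vertex reaches every other vertex by a directed path. -/
def StrongConn {α : Type*} (V : Finset α) (A : Finset (α × α)) : Prop :=
  ∀ u ∈ V, ∀ v ∈ V, Reach A u v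

/-- Minimal strongly connected: strongly connected and removing any arc
destroys strong connectivity. -/
def MSC {α : Type*} [DecidableEq α] (V : Finset α) (A : Finset (α × α)) : Prop :=
  StrongConn V A ∧ ∀ a ∈ A, ¬ StrongConn V (A.erase a)

/-- `l` is a directed (simple) path from `u` to `v` in the digraph with arc set `A`. -/
def IsPath {α : Type*} (A : Finset (α × α)) (u v : α) (l : List α) : Prop :=
  l.Chain' (fun a b => (a, b) ∈ A) ∧ l.head? = some u ∧ l.getLast? = some v ∧ l.Nodup

/-- `(u,v)` is a transitive arc: it is an arc and there is a directed path from
`u` to `v` distinct from the single arc `(u,v)`. -/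
def TransArc {α : Type*} (A : Finset (α × α)) (u v : α) : Prop :=
  (u, v) ∈ A ∧ ∃ l, IsPath A u v l ∧ l ≠ [u, v]

/-- `l` (a list of distinct vertices, of length ≥ 2) is a directed cycle:
consecutive vertices are joined by arcs, and there is an arc from the last
vertex back to the first. -/
def IsCycle {α : Type*} (A : Finset (α × α)) (l : List α) : Prop :=
  ∃ h : l ≠ [], l.Nodup ∧ 2 ≤ l.length ∧
    List.Chain (fun a b => (a, b) ∈ A) (l.getLast h) l

/-- Well-formedness: nonempty vertex set, arcs join vertices of `V`, no loops. -/
def GoodDigraph {α : Type*} (V : Finset α) (A : Finset (α × α)) : Prop :=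
  V.Nonempty ∧ ∀ a ∈ A, a.1 ∈ V ∧ a.2 ∈ V ∧ a.1 ≠ a.2

/-- Outdegree of a vertex. -/
def outdeg {α : Type*} [DecidableEq α] (A : Finset (α × α)) (v : α) : ℕ :=
  (A.filter (fun a => a.1 = v)).card

/-- Indegree of a vertex. -/
def indeg {α : Type*} [DecidableEq α] (A : Finset (α × α)) (v : α) : ℕ :=
  (A.filter (fun a => a.2 = v)).card

/-- A linear vertex has indegree and outdegree equal to 1. -/
def LinearVertex {α : Type*} [DecidableEq α] (A : Finset (α × α)) (v : α) : Prop :=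
  indeg A v = 1 ∧ outdeg A v = 1

/-- The digraph is a directed `n`-cycle: its vertices can be listed
`v₁, …, vₙ` so that the arcs are exactly `(v₁,v₂), …, (vₙ,v₁)`. -/
def IsCycleDigraph {α : Type*} [DecidableEq α] (V : Finset α) (A : Finset (α × α)) : Prop :=
  ∃ l : List α, l.Nodup ∧ 2 ≤ l.length ∧ l.toFinset = V ∧ A = (l.zip (l.rotate 1)).toFinset

/-- A directed tree: every arc is accompanied by its reverse, and the
underlying undirected graph (on the vertex set `V`) is a tree. -/
def IsDirTree {α : Type*} [DecidableEq α] (V : Finset α) (A : Finset (α × α)) : Prop :=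
  (∀ u v : α, (u, v) ∈ A → (v, u) ∈ A) ∧
  (SimpleGraph.fromRel (fun a b : {x // x ∈ V} => ((a : α), (b : α)) ∈ A)).IsTree

/-- `(V', A')` is the (internal or external) expansion of `(V, A)` by the new
vertex `v`.  Internal: an arc `(u,w)` is replaced by `(u,v)` and `(v,w)`.
External: the arcs `(u,v)` and `(v,w)` are added for vertices `u, w ∈ V`. -/
def IsExpansionBy {α : Type*} [DecidableEq α] (v : α) (V : Finset α) (A : Finset (α × α))
    (V' : Finset α) (A' : Finset (α × α)) : Prop :=
  v ∉ V ∧ V' = insert v V ∧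
    ((∃ u w, (u, w) ∈ A ∧ A' = insert (u, v) (insert (v, w) (A.erase (u, w)))) ∨
     (∃ u ∈ V, ∃ w ∈ V, A' = insert (u, v) (insert (v, w) A)))

lemma reach_mono {α : Type*} {A B : Finset (α × α)} (hAB : A ⊆ B) {x y : α}
    (h : Reach A x y) : Reach B x y :=
  Relation.ReflTransGen.mono (p := fun a b => (a, b) ∈ B) (fun a b hab => hAB hab) _ _ h

lemma reach_avoid {α : Type*} [DecidableEq α] {A : Finset (α × α)} {v u : α}
    (hu : u ≠ v)
    (hin : ∀ x, (x, v) ∈ A → x = u) (hout : ∀ x, (v, x) ∈ A → x = u)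
    {x y : α} (hy : y ≠ v) (hr : Reach A x y) :
    (x ≠ v → Reach (A.filter (fun a => a.1 ≠ v ∧ a.2 ≠ v)) x y) ∧
    (x = v → Reach (A.filter (fun a => a.1 ≠ v ∧ a.2 ≠ v)) u y) := by
  induction hr using Relation.ReflTransGen.head_induction_on with
  | refl => exact ⟨fun _ => Relation.ReflTransGen.refl, fun hx => absurd hx.symm hy.symm⟩
  | head hab _ ih =>
    rename_i a b _
    constructor
    · intro ha
      by_cases hb : b = v
      · subst hb
        have : a = u := hin a hab
        subst this
        exact ih.2 rfl
      · exact Relation.ReflTransGen.head (Finset.mem_filter.mpr ⟨hab, ha, hb⟩) (ih.1 hb)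
    · intro ha
      subst ha
      have hb : b = u := hout b hab
      subst hb
      exact ih.1 hu

/-- if `v` is a linear vertex of an MSC digraph of order `n ≥ 3`
whose unique in-neighbor equals its unique out-neighbor `u`, then deleting `v`
and its incident arcs yields an MSC digraph. -/
theorem stmt_16 {α : Type*} [DecidableEq α] (V : Finset α) (A : Finset (α × α))
    (hg : GoodDigraph V A) (h : MSC V A) (hn : 3 ≤ V.card) (v u : α)
    (huv : (u, v) ∈ A) (hvu : (v, u) ∈ A)
    (hin : ∀ x, (x, v) ∈ A → x = u) (hout : ∀ x, (v, x) ∈ A → x = u) :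
    MSC (V.erase v) (A.filter (fun a => a.1 ≠ v ∧ a.2 ≠ v)) := by
  have huV : u ∈ V := (hg.2 _ huv).1
  have hvV : v ∈ V := (hg.2 _ huv).2.1
  have huvne : u ≠ v := (hg.2 _ huv).2.2
  set A' := A.filter (fun a => a.1 ≠ v ∧ a.2 ≠ v) with hA'
  have hsub : A' ⊆ A := Finset.filter_subset _ _
  constructor
  · intro x hx y hy
    have hx' := Finset.mem_erase.mp hx
    have hy' := Finset.mem_erase.mp hy
    have hr : Reach A x y := h.1 x hx'.2 y hy'.2
    exact (reach_avoid huvne hin hout hy'.1 hr).1 hx'.1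
  · rintro a ha hsc
    have haA : a ∈ A := hsub ha
    have haf := Finset.mem_filter.mp ha
    apply h.2 a haA
    -- show StrongConn V (A.erase a)
    have hsub2 : A'.erase a ⊆ A.erase a := fun b hb => by
      have hb' := Finset.mem_erase.mp hb
      exact Finset.mem_erase.mpr ⟨hb'.1, hsub hb'.2⟩
    have key : ∀ x ∈ V, x ≠ v → ∀ y ∈ V, y ≠ v → Reach (A.erase a) x y := by
      intro x hxV hxv y hyV hyv
      exact reach_mono hsub2 (hsc x (Finset.mem_erase.mpr ⟨hxv, hxV⟩)
        y (Finset.mem_erase.mpr ⟨hyv, hyV⟩))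
    have hvuE : (v, u) ∈ A.erase a := by
      refine Finset.mem_erase.mpr ⟨?_, hvu⟩
      rintro rfl; exact haf.2.1 rfl
    have huvE : (u, v) ∈ A.erase a := by
      refine Finset.mem_erase.mpr ⟨?_, huv⟩
      rintro rfl; exact haf.2.2 rfl
    intro x hxV y hyV
    by_cases hxv : x = v
    · rw [hxv]
      by_cases hyv : y = v
      · rw [hyv]; exact Relation.ReflTransGen.refl
      · exact Relation.ReflTransGen.head hvuE (key u huV huvne y hyV hyv)
    · by_cases hyv : y = v
      · rw [hyv]
        exact (key x hxV hxv u huV huvne).tail huvE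
      · exact key x hxV hxv y hyV hyv
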